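/- Fix uniform bids b_{ij} = α_i v_{ij} with multipliers α_i ≥ 1, and fix an allocation a valid under b. Then there exists an optimal allocation a^opt with respect to the true valuations such that the VCG revenue satisfies Rev^VCG(a, b) ≥ Σ_{k=1}^{K} (c_k − c_{k+1}) · [ Σ_{(i,j) ∈ S_k(a^opt) \ S_k(a)} v_{ij} ]. -/

import Mathlib

open Finset MeasureTheory

namespace SponsoredShopping

noncomputable section

/-- An item is a pair `(i, j)`: bidder `i`'s `j`-th item. -/
abbrev Item (n m : ℕ) : Type := Fin n × Fin m

/-- An allocation assigns to each rank `k` (0-based) an item. -/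
abbrev Alloc (n m : ℕ) : Type := Fin (n * m) ≃ Item n m

/-- Maximum of `f` over a finite set, with value `0` on the empty set. -/
def fmax {ι : Type*} (s : Finset ι) (f : ι → ℝ) : ℝ :=
  WithBot.unbotD 0 (s.sup fun i => (f i : WithBot ℝ))

variable {n m : ℕ}

/-- An allocation is valid under bids `b` if bids are nonincreasing along ranks. -/
def ValidUnder (b : Item n m → ℝ) (a : Alloc n m) : Prop :=
  ∀ k k' : Fin (n * m), k ≤ k' → b (a k') ≤ b (a k)

/-- The value of bidder `i` under allocation `a`
(`c k` is the CTR of slot `k`, with `c k = 0` for `k ≥ K`). -/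
def bidderValue (c : ℕ → ℝ) (v : Item n m → ℝ) (a : Alloc n m) (i : Fin n) : ℝ :=
  ∑ k : Fin (n * m), if (a k).1 = i then c k * v (a k) else 0

/-- Social welfare of an allocation. -/
def wel (c : ℕ → ℝ) (v : Item n m → ℝ) (a : Alloc n m) : ℝ :=
  ∑ k : Fin (n * m), c k * v (a k)

/-- Optimal social welfare. -/
def welOpt (c : ℕ → ℝ) (v : Item n m → ℝ) : ℝ :=
  fmax (univ : Finset (Alloc n m)) (wel c v)

/-- GSP per-click price of the item ranked `k`: highest bid among lower-ranked
items belonging to other bidders (`0` if none). -/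
def gspPrice (b : Item n m → ℝ) (a : Alloc n m) (k : Fin (n * m)) : ℝ :=
  fmax (univ.filter fun k' : Fin (n * m) => k < k' ∧ (a k').1 ≠ (a k).1)
    (fun k' => b (a k'))

/-- Total GSP payment of bidder `i`. -/
def gspPay (c : ℕ → ℝ) (b : Item n m → ℝ) (a : Alloc n m) (i : Fin n) : ℝ :=
  ∑ k : Fin (n * m), if (a k).1 = i then c k * gspPrice b a k else 0

/-- Bid-welfare of an allocation. -/
def bidWelfare (c : ℕ → ℝ) (b : Item n m → ℝ) (a : Alloc n m) : ℝ :=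
  ∑ k : Fin (n * m), c k * b (a k)

/-- Bids with bidder `i`'s bids zeroed out. -/
def exclBids (b : Item n m → ℝ) (i : Fin n) : Item n m → ℝ :=
  fun x => if x.1 = i then 0 else b x

/-- Bid-welfare obtained by bidders other than `i` in allocation `a`. -/
def othersWelfare (c : ℕ → ℝ) (b : Item n m → ℝ) (a : Alloc n m) (i : Fin n) : ℝ :=
  ∑ k : Fin (n * m), if (a k).1 ≠ i then c k * b (a k) else 0

/-- Optimal counterfactual bid-welfare without bidder `i`. -/
def woptWithout (c : ℕ → ℝ) (b : Item n m → ℝ) (i : Fin n) : ℝ :=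
  fmax (univ : Finset (Alloc n m)) (fun a' => bidWelfare c (exclBids b i) a')

/-- VCG payment of bidder `i`. -/
def vcgPay (c : ℕ → ℝ) (b : Item n m → ℝ) (a : Alloc n m) (i : Fin n) : ℝ :=
  woptWithout c b i - othersWelfare c b a i

/-- The two mechanisms considered. -/
inductive Mech | gsp | vcg

/-- Payment of bidder `i` under mechanism `M`. -/
def pay : Mech → (ℕ → ℝ) → (Item n m → ℝ) → Alloc n m → Fin n → ℝ
  | .gsp => gspPay
  | .vcg => vcgPay

/-- `S_k(a)`: the set of items assigned to the first `k` slots in `a`. -/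
def topk (a : Alloc n m) (k : ℕ) : Finset (Item n m) :=
  (univ.filter fun r : Fin (n * m) => (r : ℕ) < k).image a


lemma le_fmax {ι : Type*} {s : Finset ι} (f : ι → ℝ) {a : ι} (ha : a ∈ s) :
    f a ≤ fmax s f := by
  have h := Finset.le_sup (f := fun i => (f i : WithBot ℝ)) ha
  unfold fmax
  cases hs : s.sup fun i => (f i : WithBot ℝ) with
  | bot => rw [hs] at h; simp at h
  | coe r => rw [hs] at h; simpa using WithBot.coe_le_coe.mp h

lemma sum_Ico_telescope (c : ℕ → ℝ) {a b : ℕ} (h : a ≤ b) :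
    ∑ t ∈ Finset.Ico a b, (c t - c (t + 1)) = c a - c b := by
  induction b, h using Nat.le_induction with
  | base => simp
  | succ b hb ih => rw [Finset.sum_Ico_succ_top hb, ih]; ring

lemma abel_nonneg (N : ℕ) (w d : ℕ → ℝ)
    (hw : ∀ s s', s ≤ s' → w s' ≤ w s) (hw0 : ∀ s, 0 ≤ w s)
    (hpre : ∀ S, S ≤ N → 0 ≤ ∑ s ∈ Finset.range S, d s) :
    0 ≤ ∑ s ∈ Finset.range N, d s * w s := by
  induction N generalizing w with
  | zero => simp
  | succ N ih =>
    set w' : ℕ → ℝ := fun s => max (w s - w N) 0 with hw'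
    have hW : ∀ s, s ≤ N → w s = w' s + w N := by
      intro s hs
      have : w N ≤ w s := hw s N hs
      simp only [hw']
      rw [max_eq_left (by linarith)]; ring
    have h1 : 0 ≤ ∑ s ∈ Finset.range N, d s * w' s := by
      apply ih
      · intro s s' hss'; simp only [hw']
        exact max_le_max (by linarith [hw s s' hss']) le_rfl
      · intro s; exact le_max_right _ _
      · intro S hS; exact hpre S (le_trans hS (Nat.le_succ N))
    have h2 : ∑ s ∈ Finset.range (N+1), d s * w s
        = ∑ s ∈ Finset.range (N+1), d s * w' s + (∑ s ∈ Finset.range (N+1), d s) * w N := by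
      rw [Finset.sum_mul, ← Finset.sum_add_distrib]
      apply Finset.sum_congr rfl
      intro s hs
      rw [Finset.mem_range] at hs
      rw [hW s (Nat.lt_succ_iff.mp hs)]; ring
    have h3 : w' N = 0 := by simp [hw']
    rw [h2, Finset.sum_range_succ, h3]
    have := hpre (N+1) le_rfl
    have := hw0 N
    nlinarith

lemma prefix_dom_sum_mul (N : ℕ) (w G H : ℕ → ℝ)
    (hw : ∀ s s', s ≤ s' → w s' ≤ w s) (hw0 : ∀ s, 0 ≤ w s)
    (hpre : ∀ S, S ≤ N → ∑ s ∈ Finset.range S, G s ≤ ∑ s ∈ Finset.range S, H s) :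
    ∑ s ∈ Finset.range N, G s * w s ≤ ∑ s ∈ Finset.range N, H s * w s := by
  have := abel_nonneg N w (fun s => H s - G s) hw hw0 (by
    intro S hS
    have := hpre S hS
    rw [Finset.sum_sub_distrib]; linarith)
  have heq : ∑ s ∈ Finset.range N, (H s - G s) * w s
      = ∑ s ∈ Finset.range N, H s * w s - ∑ s ∈ Finset.range N, G s * w s := by
    rw [← Finset.sum_sub_distrib]; apply Finset.sum_congr rfl; intros; ring
  linarith [heq ▸ this]

lemma card_fin_filter_lt (L o : ℕ) :
    ((univ : Finset (Fin L)).filter fun j : Fin L => (j : ℕ) < o).card = min L o := by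
  have himg : (((univ : Finset (Fin L)).filter fun j : Fin L => (j : ℕ) < o).image Fin.val)
      = Finset.range (min L o) := by
    ext x
    simp only [Finset.mem_image, Finset.mem_filter, Finset.mem_univ, true_and,
      Finset.mem_range, lt_min_iff]
    constructor
    · rintro ⟨j, hj, rfl⟩; exact ⟨j.isLt, hj⟩
    · rintro ⟨h1, h2⟩; exact ⟨⟨x, h1⟩, h2, rfl⟩
  have h2 : ((univ : Finset (Fin L)).filter fun j : Fin L => (j : ℕ) < o).card
      = (Finset.range (min L o)).card := by
    rw [← himg]
    exact (Finset.card_image_of_injective _ Fin.val_injective).symm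
  rw [h2, Finset.card_range]

lemma min_card_le_card_small_count {ι : Type*} [LinearOrder ι] [DecidableEq ι]
    (T : Finset ι) (o : ℕ) :
    min T.card o ≤ (T.filter fun s => (T.filter fun s' => s' < s).card < o).card := by
  classical
  set L := T.card with hL
  set φ : Fin L ≃o {x // x ∈ T} := T.orderIsoOfFin hL.symm with hφ
  have hinj : Function.Injective (fun j : Fin L => (φ j : ι)) :=
    fun j j' h => φ.injective (Subtype.coe_injective h)
  have hcount : ∀ j : Fin L, (T.filter fun s' => s' < (φ j : ι)).card = (j : ℕ) := by
    intro j
    have himg : T.filter (fun s' => s' < (φ j : ι))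
        = (univ.filter fun j' : Fin L => (j' : ℕ) < (j : ℕ)).image (fun j' => (φ j' : ι)) := by
      ext s'
      simp only [Finset.mem_filter, Finset.mem_image, Finset.mem_univ, true_and]
      constructor
      · rintro ⟨hmem, hlt⟩
        refine ⟨φ.symm ⟨s', hmem⟩, ?_, by simp⟩
        have h2 : (φ (φ.symm ⟨s', hmem⟩) : ι) < (φ j : ι) := by
          rw [OrderIso.apply_symm_apply]; exact hlt
        have h3 : φ (φ.symm ⟨s', hmem⟩) < φ j := Subtype.coe_lt_coe.mp h2
        exact_mod_cast φ.lt_iff_lt.mp h3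
      · rintro ⟨j', hj', rfl⟩
        refine ⟨(φ j').2, ?_⟩
        have h4 : φ j' < φ j := φ.lt_iff_lt.mpr (by exact_mod_cast hj')
        exact Subtype.coe_lt_coe.mpr h4
    rw [himg, Finset.card_image_of_injective _ hinj, card_fin_filter_lt]
    have := j.isLt
    omega
  have hsub : (univ.filter fun j : Fin L => (j : ℕ) < min L o).image (fun j => (φ j : ι))
      ⊆ T.filter fun s => (T.filter fun s' => s' < s).card < o := by
    intro x hx
    simp only [Finset.mem_image, Finset.mem_filter, Finset.mem_univ, true_and] at hx ⊢
    obtain ⟨j, hj, rfl⟩ := hx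
    refine ⟨(φ j).2, ?_⟩
    rw [hcount]
    omega
  have hcard := Finset.card_le_card hsub
  rw [Finset.card_image_of_injective _ hinj, card_fin_filter_lt] at hcard
  omega

lemma key_numeric {ι : Type*} [Fintype ι] [DecidableEq ι] (o p nn q : ι → ℕ)
    (h1 : ∑ i, p i ≤ ∑ i, o i)
    (h2 : ∀ i, q i ≤ nn i)
    (h3 : ∀ i, q i ≠ 0 → o i + q i ≤ p i) :
    ∑ i, q i ≤ ∑ i, min (∑ j ∈ univ.erase i, nn j) (o i) := by
  classical
  set Q := ∑ i, q i with hQ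
  have herase : ∀ i : ι, q i + ∑ j ∈ univ.erase i, q j = Q :=
    fun i => Finset.add_sum_erase _ q (mem_univ i)
  have hqQ : ∀ i, q i ≤ Q :=
    fun i => Finset.single_le_sum (fun _ _ => Nat.zero_le _) (mem_univ i)
  have hqp : ∀ i, q i ≤ p i := by
    intro i; by_cases h : q i = 0
    · omega
    · have := h3 i h; omega
  have hstep : ∀ i : ι, min (Q - q i) (o i) ≤ min (∑ j ∈ univ.erase i, nn j) (o i) := by
    intro i
    apply min_le_min _ le_rfl
    have he : Q - q i = ∑ j ∈ univ.erase i, q j := by have := herase i; omega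
    rw [he]
    exact Finset.sum_le_sum fun j _ => h2 j
  have main : Q ≤ ∑ i, min (Q - q i) (o i) := by
    by_cases hA : ∀ i, o i ≤ Q - q i
    · have heq : ∑ i, min (Q - q i) (o i) = ∑ i, o i :=
        Finset.sum_congr rfl fun i _ => min_eq_right (hA i)
      rw [heq]
      have hQp : Q ≤ ∑ i, p i := Finset.sum_le_sum fun i _ => hqp i
      omega
    · push_neg at hA
      obtain ⟨i₀, hi₀⟩ := hA
      by_cases hq0 : q i₀ = 0
      · have h0 : min (Q - q i₀) (o i₀) = Q := by omega
        calc Q = min (Q - q i₀) (o i₀) := h0.symm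
          _ ≤ ∑ i, min (Q - q i) (o i) :=
            Finset.single_le_sum (f := fun i => min (Q - q i) (o i))
              (fun _ _ => Nat.zero_le _) (mem_univ i₀)
      · have hQj : ∀ j ∈ univ.erase i₀, q i₀ ≤ Q - q j := by
          intro j hjmem
          have hsing : q j ≤ ∑ k ∈ univ.erase i₀, q k :=
            Finset.single_le_sum (fun _ _ => Nat.zero_le _) hjmem
          have := herase i₀
          omega
        have hkey : q i₀ ≤ ∑ j ∈ univ.erase i₀, min (Q - q j) (o j) := by
          by_cases hB : ∃ j ∈ univ.erase i₀, q i₀ ≤ o j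
          · obtain ⟨j, hjmem, hj⟩ := hB
            have h5 : q i₀ ≤ min (Q - q j) (o j) := le_min (hQj j hjmem) hj
            exact le_trans h5 (Finset.single_le_sum (f := fun j => min (Q - q j) (o j))
              (fun _ _ => Nat.zero_le _) hjmem)
          · push_neg at hB
            have heq2 : ∑ j ∈ univ.erase i₀, min (Q - q j) (o j)
                = ∑ j ∈ univ.erase i₀, o j :=
              Finset.sum_congr rfl fun j hj =>
                min_eq_right (le_of_lt (lt_of_lt_of_le (hB j hj) (hQj j hj)))
            rw [heq2]
            have hp : p i₀ ≤ ∑ i, p i :=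
              Finset.single_le_sum (fun _ _ => Nat.zero_le _) (mem_univ i₀)
            have ho : o i₀ + ∑ j ∈ univ.erase i₀, o j = ∑ i, o i :=
              Finset.add_sum_erase _ o (mem_univ i₀)
            have := h3 i₀ hq0
            omega
        have hsplit : min (Q - q i₀) (o i₀) + ∑ j ∈ univ.erase i₀, min (Q - q j) (o j)
            = ∑ i, min (Q - q i) (o i) :=
          Finset.add_sum_erase _ (fun i => min (Q - q i) (o i)) (mem_univ i₀)
        have hq0' : q i₀ ≤ Q := hqQ i₀
        omega
  calc Q ≤ ∑ i, min (Q - q i) (o i) := main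
    _ ≤ ∑ i, min (∑ j ∈ univ.erase i, nn j) (o i) := Finset.sum_le_sum fun i _ => hstep i

lemma exists_shiftup (N : ℕ) (P : Fin N → Prop) [DecidablePred P] :
    ∃ e : Equiv.Perm (Fin N), ∀ s, P s →
      (e s : ℕ) = (univ.filter fun s' => s' < s ∧ P s').card := by
  classical
  set M := (univ.filter fun s : Fin N => P s).card with hM
  have hMN : M + (univ.filter fun s : Fin N => ¬ P s).card = N := by
    rw [hM, Finset.card_filter_add_card_filter_not]
    simp
  have hmono : ∀ (Q : Fin N → Prop) (_ : DecidablePred Q) (s s' : Fin N), s < s' → Q s →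
      (univ.filter fun x => x < s ∧ Q x).card < (univ.filter fun x => x < s' ∧ Q x).card := by
    intro Q _ s s' hss' hQs
    apply Finset.card_lt_card
    rw [Finset.ssubset_iff_of_subset]
    · exact ⟨s, by simp [hss', hQs], by simp⟩
    · intro x hx
      simp only [Finset.mem_filter, Finset.mem_univ, true_and] at hx ⊢
      exact ⟨lt_trans hx.1 hss', hx.2⟩
  have hbound : ∀ (Q : Fin N → Prop) (_ : DecidablePred Q) (s : Fin N), Q s →
      (univ.filter fun x => x < s ∧ Q x).card < (univ.filter fun x : Fin N => Q x).card := by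
    intro Q _ s hQs
    apply Finset.card_lt_card
    rw [Finset.ssubset_iff_of_subset]
    · exact ⟨s, by simp [hQs], by simp⟩
    · intro x hx
      simp only [Finset.mem_filter, Finset.mem_univ, true_and] at hx ⊢
      exact hx.2
  set cP : Fin N → ℕ := fun s => (univ.filter fun s' => s' < s ∧ P s').card with hcP
  set cN : Fin N → ℕ := fun s => (univ.filter fun s' => s' < s ∧ ¬ P s').card with hcN
  have hbP : ∀ s, P s → cP s < M := fun s hs => hbound P _ s hs
  have hbN : ∀ s, ¬ P s → M + cN s < N := by
    intro s hs
    have h := hbound (fun x => ¬ P x) (fun x => instDecidableNot) s hs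
    have e1 : (univ.filter fun x : Fin N => (fun x => ¬ P x) x) = (univ.filter fun s : Fin N => ¬ P s) := rfl
    have e2 : (univ.filter fun x : Fin N => x < s ∧ (fun x => ¬ P x) x) = (univ.filter fun s' => s' < s ∧ ¬ P s') := rfl
    rw [e1, e2] at h
    have e3 : cN s = (univ.filter fun s' => s' < s ∧ ¬ P s').card := rfl
    omega
  have hMleN : M ≤ N := by omega
  set f : Fin N → Fin N := fun s =>
    if h : P s then ⟨cP s, lt_of_lt_of_le (hbP s h) hMleN⟩ else ⟨M + cN s, hbN s h⟩ with hf
  have hinj : Function.Injective f := by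
    intro s s' hss
    by_contra hne
    rcases lt_trichotomy s s' with hlt | heq | hlt
    · by_cases hs : P s <;> by_cases hs' : P s'
      · rw [hf] at hss; simp only [dif_pos hs, dif_pos hs', Fin.mk.injEq] at hss
        exact absurd hss (Nat.ne_of_lt (hmono P _ s s' hlt hs))
      · rw [hf] at hss; simp only [dif_pos hs, dif_neg hs', Fin.mk.injEq] at hss
        have := hbP s hs; omega
      · rw [hf] at hss; simp only [dif_neg hs, dif_pos hs', Fin.mk.injEq] at hss
        have := hbP s' hs'; omega
      · rw [hf] at hss; simp only [dif_neg hs, dif_neg hs', Fin.mk.injEq] at hss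
        exact absurd (by omega : cN s = cN s')
          (Nat.ne_of_lt (hmono (fun x => ¬ P x) _ s s' hlt hs))
    · exact hne heq
    · by_cases hs : P s <;> by_cases hs' : P s'
      · rw [hf] at hss; simp only [dif_pos hs, dif_pos hs', Fin.mk.injEq] at hss
        exact absurd hss.symm (Nat.ne_of_lt (hmono P _ s' s hlt hs'))
      · rw [hf] at hss; simp only [dif_pos hs, dif_neg hs', Fin.mk.injEq] at hss
        have := hbP s hs; omega
      · rw [hf] at hss; simp only [dif_neg hs, dif_pos hs', Fin.mk.injEq] at hss
        have := hbP s' hs'; omega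
      · rw [hf] at hss; simp only [dif_neg hs, dif_neg hs', Fin.mk.injEq] at hss
        exact absurd (by omega : cN s' = cN s)
          (Nat.ne_of_lt (hmono (fun x => ¬ P x) _ s' s hlt hs'))
  refine ⟨Equiv.ofBijective f (Finite.injective_iff_bijective.mp hinj), ?_⟩
  intro s hs
  show (f s : ℕ) = _
  rw [hf]
  simp only [dif_pos hs]
  rfl

/-- number of items not owned by `i` ranked before `s`. -/
def cntO {N nB : ℕ} (own : Fin N → Fin nB) (i : Fin nB) (s : Fin N) : ℕ :=
  (univ.filter fun s' : Fin N => s' < s ∧ own s' ≠ i).card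

/-- number of bidders `i ≠ own s` whose removal lifts `s` to slot `≤ t < s`. -/
def MtsD {N nB : ℕ} (own : Fin N → Fin nB) (t : ℕ) (s : Fin N) : ℕ :=
  (univ.filter fun i : Fin nB => own s ≠ i ∧ cntO own i s ≤ t ∧ t < (s : ℕ)).card

lemma cntO_le {N nB : ℕ} (own : Fin N → Fin nB) (i : Fin nB) (s : Fin N) :
    cntO own i s ≤ (s : ℕ) := by
  have hsub : (univ.filter fun s' : Fin N => s' < s ∧ own s' ≠ i)
      ⊆ (univ.filter fun s' : Fin N => (s' : ℕ) < (s : ℕ)) := by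
    intro x hx
    simp only [Finset.mem_filter, Finset.mem_univ, true_and] at hx ⊢
    exact hx.1
  have h1 := Finset.card_le_card hsub
  rw [card_fin_filter_lt] at h1
  have := s.isLt
  unfold cntO
  omega

lemma Q_layers (N nB : ℕ) (own : Fin N → Fin nB) (β : Fin N → ℝ) (c : ℕ → ℝ) :
    ∑ t ∈ Finset.range N, (c t - c (t + 1)) * ∑ s : Fin N, (MtsD own t s : ℝ) * β s
      = ∑ i : Fin nB, ∑ s : Fin N,
          (if own s ≠ i then (c (cntO own i s) - c (s : ℕ)) * β s else 0) := by
  have hpoint : ∀ (i : Fin nB) (s : Fin N),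
      (if own s ≠ i then (c (cntO own i s) - c (s : ℕ)) * β s else 0)
        = ∑ t ∈ Finset.range N, (if own s ≠ i ∧ cntO own i s ≤ t ∧ t < (s : ℕ)
            then (c t - c (t + 1)) * β s else 0) := by
    intro i s
    by_cases h : own s ≠ i
    · simp only [if_pos h, h, true_and]
      rw [← sum_Ico_telescope c (cntO_le own i s), Finset.sum_mul]
      have hIco : Finset.Ico (cntO own i s) (s : ℕ)
          = (Finset.range N).filter (fun t => cntO own i s ≤ t ∧ t < (s : ℕ)) := by
        ext u
        simp only [Finset.mem_Ico, Finset.mem_filter, Finset.mem_range]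
        have := s.isLt
        omega
      rw [hIco, Finset.sum_filter]
      apply Finset.sum_congr rfl; intro u _
      simp [h]
    · simp only [if_neg h]
      symm; apply Finset.sum_eq_zero; intro t _
      simp only [ite_eq_right_iff]
      intro hc
      exact absurd hc.1 h
  calc ∑ t ∈ Finset.range N, (c t - c (t + 1)) * ∑ s : Fin N, (MtsD own t s : ℝ) * β s
      = ∑ t ∈ Finset.range N, ∑ s : Fin N,
          (MtsD own t s : ℝ) * ((c t - c (t + 1)) * β s) := by
        apply Finset.sum_congr rfl; intro t _
        rw [Finset.mul_sum]; apply Finset.sum_congr rfl; intros; ring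
    _ = ∑ s : Fin N, ∑ t ∈ Finset.range N,
          (MtsD own t s : ℝ) * ((c t - c (t + 1)) * β s) := Finset.sum_comm
    _ = ∑ s : Fin N, ∑ t ∈ Finset.range N, ∑ i : Fin nB,
          (if own s ≠ i ∧ cntO own i s ≤ t ∧ t < (s : ℕ)
            then (c t - c (t + 1)) * β s else 0) := by
        apply Finset.sum_congr rfl; intro s _; apply Finset.sum_congr rfl; intro t _
        rw [Finset.sum_ite, Finset.sum_const, Finset.sum_const_zero, add_zero, nsmul_eq_mul]
        rfl
    _ = ∑ s : Fin N, ∑ i : Fin nB, ∑ t ∈ Finset.range N,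
          (if own s ≠ i ∧ cntO own i s ≤ t ∧ t < (s : ℕ)
            then (c t - c (t + 1)) * β s else 0) := by
        apply Finset.sum_congr rfl; intro s _; exact Finset.sum_comm
    _ = ∑ i : Fin nB, ∑ s : Fin N, ∑ t ∈ Finset.range N,
          (if own s ≠ i ∧ cntO own i s ≤ t ∧ t < (s : ℕ)
            then (c t - c (t + 1)) * β s else 0) := Finset.sum_comm
    _ = ∑ i : Fin nB, ∑ s : Fin N,
          (if own s ≠ i then (c (cntO own i s) - c (s : ℕ)) * β s else 0) := by
        apply Finset.sum_congr rfl; intro i _; apply Finset.sum_congr rfl; intro s _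
        exact (hpoint i s).symm

lemma vcgPay_ge (c : ℕ → ℝ) (b : Item n m → ℝ) (a : Alloc n m) (i : Fin n) :
    ∑ s : Fin (n * m), (if (a s).1 ≠ i then
        (c (cntO (fun s' => (a s').1) i s) - c (s : ℕ)) * b (a s) else 0)
      ≤ vcgPay c b a i := by
  classical
  obtain ⟨e, he⟩ := exists_shiftup (n * m) (fun s => (a s).1 ≠ i)
  have h1 : bidWelfare c (exclBids b i) (e.symm.trans a) ≤ woptWithout c b i :=
    le_fmax _ (mem_univ _)
  have h2 : bidWelfare c (exclBids b i) (e.symm.trans a)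
      = ∑ s : Fin (n * m), (if (a s).1 ≠ i then
          c (cntO (fun s' => (a s').1) i s) * b (a s) else 0) := by
    unfold bidWelfare
    rw [← Equiv.sum_comp e (fun k => (c k : ℝ) * exclBids b i ((e.symm.trans a) k))]
    apply Finset.sum_congr rfl
    intro s _
    simp only [Equiv.trans_apply, Equiv.symm_apply_apply]
    unfold exclBids
    by_cases h : (a s).1 = i
    · simp [h]
    · rw [if_neg h, if_pos h]
      congr 2
      exact he s h
  have h3 : othersWelfare c b a i
      = ∑ s : Fin (n * m), (if (a s).1 ≠ i then (c (s : ℕ)) * b (a s) else 0) := rfl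
  have h4 : ∑ s : Fin (n * m), (if (a s).1 ≠ i then
        (c (cntO (fun s' => (a s').1) i s) - c (s : ℕ)) * b (a s) else 0)
      = (∑ s : Fin (n * m), (if (a s).1 ≠ i then
          c (cntO (fun s' => (a s').1) i s) * b (a s) else 0))
        - ∑ s : Fin (n * m), (if (a s).1 ≠ i then (c (s : ℕ)) * b (a s) else 0) := by
    rw [← Finset.sum_sub_distrib]
    apply Finset.sum_congr rfl; intro s _
    by_cases h : (a s).1 ≠ i
    · simp only [if_pos h]; ring
    · simp only [if_neg h]; ring
  unfold vcgPay
  rw [h4, ← h3, ← h2]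
  linarith

lemma card_filter_fiber {N nB : ℕ} (own : Fin N → Fin nB) (A : Fin N → Prop) [DecidablePred A] :
    (univ.filter fun s => A s).card = ∑ i : Fin nB, (univ.filter fun s => A s ∧ own s = i).card := by
  classical
  rw [Finset.card_eq_sum_card_fiberwise (f := own) (t := univ) (fun x _ => mem_univ _)]
  apply Finset.sum_congr rfl; intro i _
  congr 1
  ext y
  simp only [Finset.mem_filter, Finset.mem_univ, true_and]

lemma card_filter_split {N : ℕ} (A B : Fin N → Prop) [DecidablePred A] [DecidablePred B] :
    (univ.filter fun s => A s ∧ B s).card + (univ.filter fun s => A s ∧ ¬ B s).card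
      = (univ.filter fun s => A s).card := by
  classical
  rw [← Finset.card_union_of_disjoint]
  · congr 1
    ext y
    simp only [Finset.mem_union, Finset.mem_filter, Finset.mem_univ, true_and]
    tauto
  · rw [Finset.disjoint_left]
    intro y h1 h2
    simp only [Finset.mem_filter, Finset.mem_univ, true_and] at h1 h2
    tauto

lemma prefix_count (N nB : ℕ) (own : Fin N → Fin nB) (rk : Fin N → Fin N)
    (hrk : Function.Bijective rk)
    (hstab : ∀ s s' : Fin N, s' < s → own s' = own s → rk s' < rk s)
    (t S : ℕ) (ht : t < N) :
    (univ.filter fun s : Fin N => (rk s : ℕ) ≤ t ∧ t < (s : ℕ) ∧ (s : ℕ) < S).card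
      ≤ ∑ s ∈ univ.filter (fun s : Fin N => (s : ℕ) < S), MtsD own t s := by
  classical
  set o : Fin nB → ℕ :=
    fun i => (univ.filter fun s : Fin N => (s : ℕ) ≤ t ∧ own s = i).card with ho
  set p : Fin nB → ℕ :=
    fun i => (univ.filter fun s : Fin N => (rk s : ℕ) ≤ t ∧ own s = i).card with hp
  set nn : Fin nB → ℕ :=
    fun i => (univ.filter fun s : Fin N => (t < (s : ℕ) ∧ (s : ℕ) < S) ∧ own s = i).card with hnn
  set q : Fin nB → ℕ :=
    fun i => (univ.filter fun s : Fin N =>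
      ((rk s : ℕ) ≤ t ∧ t < (s : ℕ) ∧ (s : ℕ) < S) ∧ own s = i).card with hq
  have hcard_le_t : (univ.filter fun s : Fin N => (s : ℕ) ≤ t).card = t + 1 := by
    have he : (univ.filter fun s : Fin N => (s : ℕ) ≤ t)
        = (univ.filter fun s : Fin N => (s : ℕ) < t + 1) := by
      apply Finset.filter_congr
      intro s _
      constructor <;> (intro; omega)
    rw [he, card_fin_filter_lt]
    omega
  have hcard_rk : (univ.filter fun s : Fin N => (rk s : ℕ) ≤ t).card = t + 1 := by
    set ρ := Equiv.ofBijective rk hrk with hρ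
    have himg : (univ.filter fun s : Fin N => (rk s : ℕ) ≤ t)
        = (univ.filter fun u : Fin N => (u : ℕ) ≤ t).image ρ.symm := by
      ext s
      simp only [Finset.mem_filter, Finset.mem_univ, true_and, Finset.mem_image]
      constructor
      · intro h
        refine ⟨ρ s, h, ρ.symm_apply_apply s⟩
      · rintro ⟨u, hu, rfl⟩
        have : rk (ρ.symm u) = ρ (ρ.symm u) := rfl
        rw [this, ρ.apply_symm_apply]
        exact hu
    rw [himg, Finset.card_image_of_injective _ ρ.symm.injective, hcard_le_t]
  have h1 : ∑ i, p i ≤ ∑ i, o i := by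
    have e1 : (univ.filter fun s : Fin N => (rk s : ℕ) ≤ t).card = ∑ i : Fin nB, p i :=
      card_filter_fiber own _
    have e2 : (univ.filter fun s : Fin N => (s : ℕ) ≤ t).card = ∑ i : Fin nB, o i :=
      card_filter_fiber own _
    omega
  have h2 : ∀ i, q i ≤ nn i := by
    intro i
    apply Finset.card_le_card
    intro x hx
    simp only [Finset.mem_filter, Finset.mem_univ, true_and] at hx ⊢
    exact ⟨⟨hx.1.2.1, hx.1.2.2⟩, hx.2⟩
  have h3 : ∀ i, q i ≠ 0 → o i + q i ≤ p i := by
    intro i hqi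
    have hne : (univ.filter fun s : Fin N =>
        ((rk s : ℕ) ≤ t ∧ t < (s : ℕ) ∧ (s : ℕ) < S) ∧ own s = i).Nonempty :=
      Finset.card_ne_zero.mp hqi
    obtain ⟨x, hx⟩ := hne
    simp only [Finset.mem_filter, Finset.mem_univ, true_and] at hx
    obtain ⟨⟨hrkx, htx, hxS⟩, hox⟩ := hx
    have hsub : (univ.filter fun s : Fin N => (s : ℕ) ≤ t ∧ own s = i)
        ∪ (univ.filter fun s : Fin N =>
            ((rk s : ℕ) ≤ t ∧ t < (s : ℕ) ∧ (s : ℕ) < S) ∧ own s = i)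
        ⊆ (univ.filter fun s : Fin N => (rk s : ℕ) ≤ t ∧ own s = i) := by
      intro y hy
      simp only [Finset.mem_union, Finset.mem_filter, Finset.mem_univ, true_and] at hy ⊢
      rcases hy with ⟨hyt, hoy⟩ | ⟨⟨h1', _, _⟩, hoy⟩
      · refine ⟨?_, hoy⟩
        have hyx : y < x := by
          rw [Fin.lt_def]; omega
        have h5 : rk y < rk x := hstab x y hyx (hoy.trans hox.symm)
        have h6 : (rk y : ℕ) < (rk x : ℕ) := h5
        omega
      · exact ⟨h1', hoy⟩
    have hdisj : Disjoint (univ.filter fun s : Fin N => (s : ℕ) ≤ t ∧ own s = i)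
        (univ.filter fun s : Fin N =>
          ((rk s : ℕ) ≤ t ∧ t < (s : ℕ) ∧ (s : ℕ) < S) ∧ own s = i) := by
      rw [Finset.disjoint_left]
      intro y hy1 hy2
      simp only [Finset.mem_filter, Finset.mem_univ, true_and] at hy1 hy2
      omega
    have hcle := Finset.card_le_card hsub
    rw [Finset.card_union_of_disjoint hdisj] at hcle
    exact hcle
  have hKi : ∀ i : Fin nB, min (∑ j ∈ univ.erase i, nn j) (o i)
      ≤ (univ.filter fun s : Fin N => (s : ℕ) < S
          ∧ (own s ≠ i ∧ cntO own i s ≤ t ∧ t < (s : ℕ))).card := by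
    intro i
    set T : Finset (Fin N) :=
      univ.filter (fun s : Fin N => (t < (s : ℕ) ∧ (s : ℕ) < S) ∧ own s ≠ i) with hT
    have htot : (univ.filter fun s : Fin N => t < (s : ℕ) ∧ (s : ℕ) < S).card
        = ∑ j : Fin nB, nn j := card_filter_fiber own _
    have hsplitT : nn i + T.card
        = (univ.filter fun s : Fin N => t < (s : ℕ) ∧ (s : ℕ) < S).card :=
      card_filter_split _ _
    have herase : ∑ j ∈ univ.erase i, nn j = T.card := by
      have h6 : nn i + ∑ j ∈ univ.erase i, nn j = ∑ j : Fin nB, nn j :=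
        Finset.add_sum_erase _ nn (mem_univ i)
      omega
    rw [herase]
    refine le_trans (min_card_le_card_small_count T (o i)) (Finset.card_le_card ?_)
    intro s hs
    simp only [hT, Finset.mem_filter, Finset.mem_univ, true_and] at hs ⊢
    obtain ⟨⟨⟨hts, hsS⟩, hos⟩, hcnt⟩ := hs
    refine ⟨hsS, hos, ?_, hts⟩
    -- show cntO own i s ≤ t
    have hA1 : (univ.filter fun s' : Fin N => s' < s ∧ own s' ≠ i)
        = (univ.filter fun s' : Fin N => (s' : ℕ) ≤ t ∧ own s' ≠ i)
          ∪ ((univ.filter (fun s' : Fin N => (t < (s' : ℕ) ∧ (s' : ℕ) < S) ∧ own s' ≠ i)).filter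
              (fun s' => s' < s)) := by
      ext y
      simp only [Finset.mem_union, Finset.mem_filter, Finset.mem_univ, true_and, Fin.lt_def]
      constructor
      · rintro ⟨hys, hoy⟩
        by_cases hyt : (y : ℕ) ≤ t
        · exact Or.inl ⟨hyt, hoy⟩
        · exact Or.inr ⟨⟨⟨by omega, by omega⟩, hoy⟩, hys⟩
      · rintro (⟨hyt, hoy⟩ | ⟨⟨⟨hty, hyS⟩, hoy⟩, hys⟩)
        · exact ⟨by omega, hoy⟩
        · exact ⟨hys, hoy⟩
    have hdisj13 : Disjoint (univ.filter fun s' : Fin N => (s' : ℕ) ≤ t ∧ own s' ≠ i)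
        ((univ.filter (fun s' : Fin N => (t < (s' : ℕ) ∧ (s' : ℕ) < S) ∧ own s' ≠ i)).filter
          (fun s' => s' < s)) := by
      rw [Finset.disjoint_left]
      intro y hy1 hy2
      simp only [Finset.mem_filter, Finset.mem_univ, true_and] at hy1 hy2
      omega
    have hcnteq : cntO own i s
        = (univ.filter fun s' : Fin N => (s' : ℕ) ≤ t ∧ own s' ≠ i).card
          + ((univ.filter (fun s' : Fin N => (t < (s' : ℕ) ∧ (s' : ℕ) < S) ∧ own s' ≠ i)).filter
              (fun s' => s' < s)).card := by
      unfold cntO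
      rw [hA1, Finset.card_union_of_disjoint hdisj13]
    have hA2 : o i + (univ.filter fun s' : Fin N => (s' : ℕ) ≤ t ∧ own s' ≠ i).card
        = t + 1 := by
      have h7 : (univ.filter fun s' : Fin N => (s' : ℕ) ≤ t ∧ own s' = i).card
          + (univ.filter fun s' : Fin N => (s' : ℕ) ≤ t ∧ ¬ own s' = i).card
          = (univ.filter fun s' : Fin N => (s' : ℕ) ≤ t).card := card_filter_split _ _
      have ho_i : o i = (univ.filter fun s' : Fin N => (s' : ℕ) ≤ t ∧ own s' = i).card := rfl
      have hne_eq : (univ.filter fun s' : Fin N => (s' : ℕ) ≤ t ∧ ¬ own s' = i)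
          = (univ.filter fun s' : Fin N => (s' : ℕ) ≤ t ∧ own s' ≠ i) := rfl
      rw [hne_eq] at h7
      omega
    -- hcnt : (T.filter (· < s)).card < o i  (with T as set)
    omega
  -- assemble
  have hLHS : (univ.filter fun s : Fin N =>
      (rk s : ℕ) ≤ t ∧ t < (s : ℕ) ∧ (s : ℕ) < S).card = ∑ i : Fin nB, q i :=
    card_filter_fiber own _
  have hnum := key_numeric o p nn q h1 h2 h3
  have hdouble : ∑ s ∈ univ.filter (fun s : Fin N => (s : ℕ) < S), MtsD own t s
      = ∑ i : Fin nB, (univ.filter fun s : Fin N => (s : ℕ) < S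
          ∧ (own s ≠ i ∧ cntO own i s ≤ t ∧ t < (s : ℕ))).card := by
    have e : ∀ s : Fin N, MtsD own t s
        = ∑ i : Fin nB, (if own s ≠ i ∧ cntO own i s ≤ t ∧ t < (s : ℕ) then 1 else 0) := by
      intro s
      unfold MtsD
      rw [Finset.card_filter]
    rw [Finset.sum_congr rfl (fun s _ => e s), Finset.sum_comm]
    apply Finset.sum_congr rfl
    intro i _
    have e2 : ∑ s ∈ univ.filter (fun s : Fin N => (s : ℕ) < S),
        (if own s ≠ i ∧ cntO own i s ≤ t ∧ t < (s : ℕ) then 1 else 0)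
        = ((univ.filter (fun s : Fin N => (s : ℕ) < S)).filter
            (fun s => own s ≠ i ∧ cntO own i s ≤ t ∧ t < (s : ℕ))).card :=
      (Finset.card_filter _ _).symm
    rw [e2]
    congr 1
    ext y
    simp only [Finset.mem_filter, Finset.mem_univ, true_and]
  rw [hLHS, hdouble]
  exact le_trans hnum (Finset.sum_le_sum fun i _ => hKi i)

lemma sum_range_dite (N S : ℕ) (hS : S ≤ N) (F : Fin N → ℝ) :
    ∑ sn ∈ Finset.range S, (if h : sn < N then F ⟨sn, h⟩ else 0)
      = ∑ s ∈ univ.filter (fun s : Fin N => (s : ℕ) < S), F s := by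
  induction S with
  | zero => simp
  | succ S ih =>
    have hSN : S < N := hS
    rw [Finset.sum_range_succ, ih (le_of_lt hSN)]
    have hins : (univ.filter fun s : Fin N => (s : ℕ) < S + 1)
        = insert (⟨S, hSN⟩ : Fin N) (univ.filter fun s : Fin N => (s : ℕ) < S) := by
      ext y
      simp only [Finset.mem_filter, Finset.mem_univ, true_and, Finset.mem_insert, Fin.ext_iff]
      omega
    rw [hins, Finset.sum_insert (by simp), dif_pos hSN]
    ring

lemma prefix_dom_fin (N : ℕ) (β G H : Fin N → ℝ)
    (hβmono : ∀ s s' : Fin N, s ≤ s' → β s' ≤ β s) (hβ0 : ∀ s, 0 ≤ β s)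
    (hpre : ∀ S, S ≤ N → ∑ s ∈ univ.filter (fun s : Fin N => (s : ℕ) < S), G s
        ≤ ∑ s ∈ univ.filter (fun s : Fin N => (s : ℕ) < S), H s) :
    ∑ s : Fin N, G s * β s ≤ ∑ s : Fin N, H s * β s := by
  have hw : ∀ s s' : ℕ, s ≤ s' →
      (if h : s' < N then β ⟨s', h⟩ else 0) ≤ (if h : s < N then β ⟨s, h⟩ else 0) := by
    intro s s' hss'
    by_cases h1 : s' < N
    · have h0 : s < N := lt_of_le_of_lt hss' h1
      rw [dif_pos h1, dif_pos h0]
      exact hβmono ⟨s, h0⟩ ⟨s', h1⟩ hss'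
    · rw [dif_neg h1]
      by_cases h0 : s < N
      · rw [dif_pos h0]; exact hβ0 _
      · rw [dif_neg h0]
  have hw0 : ∀ s : ℕ, (0 : ℝ) ≤ (if h : s < N then β ⟨s, h⟩ else 0) := by
    intro s
    by_cases h : s < N
    · rw [dif_pos h]; exact hβ0 _
    · rw [dif_neg h]
  have hpre' : ∀ S, S ≤ N →
      ∑ sn ∈ Finset.range S, (if h : sn < N then G ⟨sn, h⟩ else 0)
        ≤ ∑ sn ∈ Finset.range S, (if h : sn < N then H ⟨sn, h⟩ else 0) := by
    intro S hS
    rw [sum_range_dite N S hS G, sum_range_dite N S hS H]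
    exact hpre S hS
  have key := prefix_dom_sum_mul N
    (fun sn => if h : sn < N then β ⟨sn, h⟩ else 0)
    (fun sn => if h : sn < N then G ⟨sn, h⟩ else 0)
    (fun sn => if h : sn < N then H ⟨sn, h⟩ else 0)
    hw hw0 hpre'
  have hsum : ∀ F : Fin N → ℝ,
      ∑ sn ∈ Finset.range N,
        (if h : sn < N then F ⟨sn, h⟩ else 0) * (if h : sn < N then β ⟨sn, h⟩ else 0)
      = ∑ s : Fin N, F s * β s := by
    intro F
    have e0 : ∀ sn, (if h : sn < N then F ⟨sn, h⟩ else 0) * (if h : sn < N then β ⟨sn, h⟩ else 0)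
        = (if h : sn < N then F ⟨sn, h⟩ * β ⟨sn, h⟩ else 0) := by
      intro sn
      by_cases h : sn < N
      · rw [dif_pos h, dif_pos h, dif_pos h]
      · simp only [dif_neg h, zero_mul]
    calc ∑ sn ∈ Finset.range N,
          (if h : sn < N then F ⟨sn, h⟩ else 0) * (if h : sn < N then β ⟨sn, h⟩ else 0)
        = ∑ sn ∈ Finset.range N, (if h : sn < N then F ⟨sn, h⟩ * β ⟨sn, h⟩ else 0) :=
          Finset.sum_congr rfl fun sn _ => e0 sn
      _ = ∑ s ∈ univ.filter (fun s : Fin N => (s : ℕ) < N), F s * β s :=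
          sum_range_dite N N le_rfl (fun s => F s * β s)
      _ = ∑ s : Fin N, F s * β s := by
          rw [Finset.filter_true_of_mem (fun s _ => s.isLt)]
  exact le_trans (le_of_eq (hsum G).symm) (le_trans key (le_of_eq (hsum H)))

lemma layer_ineq (N nB : ℕ) (own : Fin N → Fin nB) (rk : Fin N → Fin N)
    (hrk : Function.Bijective rk)
    (hstab : ∀ s s' : Fin N, s' < s → own s' = own s → rk s' < rk s)
    (β : Fin N → ℝ) (hβmono : ∀ s s' : Fin N, s ≤ s' → β s' ≤ β s) (hβ0 : ∀ s, 0 ≤ β s)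
    (t : ℕ) :
    ∑ s ∈ univ.filter (fun s : Fin N => (rk s : ℕ) ≤ t ∧ t < (s : ℕ)), β s
      ≤ ∑ s : Fin N, (MtsD own t s : ℝ) * β s := by
  classical
  by_cases ht : t < N
  case neg =>
    have hemp : (univ.filter fun s : Fin N => (rk s : ℕ) ≤ t ∧ t < (s : ℕ)) = ∅ := by
      ext s
      simp only [Finset.mem_filter, Finset.mem_univ, true_and, Finset.notMem_empty, iff_false]
      intro h
      have := s.isLt
      omega
    rw [hemp, Finset.sum_empty]
    exact Finset.sum_nonneg fun s _ => mul_nonneg (Nat.cast_nonneg _) (hβ0 s)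
  case pos =>
    have hpre : ∀ S, S ≤ N →
        ∑ s ∈ univ.filter (fun s : Fin N => (s : ℕ) < S),
          (if (rk s : ℕ) ≤ t ∧ t < (s : ℕ) then (1 : ℝ) else 0)
        ≤ ∑ s ∈ univ.filter (fun s : Fin N => (s : ℕ) < S), (MtsD own t s : ℝ) := by
      intro S hS
      have hGs : ∑ s ∈ univ.filter (fun s : Fin N => (s : ℕ) < S),
          (if (rk s : ℕ) ≤ t ∧ t < (s : ℕ) then (1 : ℝ) else 0)
          = ((univ.filter fun s : Fin N =>
              (rk s : ℕ) ≤ t ∧ t < (s : ℕ) ∧ (s : ℕ) < S).card : ℝ) := by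
        rw [Finset.sum_boole]
        congr 2
        ext y
        simp only [Finset.mem_filter, Finset.mem_univ, true_and]
        tauto
      have hHs : ∑ s ∈ univ.filter (fun s : Fin N => (s : ℕ) < S), (MtsD own t s : ℝ)
          = ((∑ s ∈ univ.filter (fun s : Fin N => (s : ℕ) < S), MtsD own t s : ℕ) : ℝ) := by
        rw [Nat.cast_sum]
      rw [hGs, hHs]
      exact_mod_cast prefix_count N nB own rk hrk hstab t S ht
    have key := prefix_dom_fin N β
      (fun s => if (rk s : ℕ) ≤ t ∧ t < (s : ℕ) then (1 : ℝ) else 0)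
      (fun s => (MtsD own t s : ℝ)) hβmono hβ0 hpre
    have hL : ∑ s ∈ univ.filter (fun s : Fin N => (rk s : ℕ) ≤ t ∧ t < (s : ℕ)), β s
        = ∑ s : Fin N, (if (rk s : ℕ) ≤ t ∧ t < (s : ℕ) then (1 : ℝ) else 0) * β s := by
      rw [Finset.sum_filter]
      apply Finset.sum_congr rfl
      intro s _
      by_cases h : (rk s : ℕ) ≤ t ∧ t < (s : ℕ)
      · rw [if_pos h, if_pos h, one_mul]
      · rw [if_neg h, if_neg h, zero_mul]
    rw [hL]
    exact key


/-- Revenue lemma for VCG: there is an optimal allocation whose displaced items'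
layered value is covered by the revenue. -/
theorem vcg_revenue_covers_displaced_value
    (n m K : ℕ) (v : Item n m → ℝ) (c : ℕ → ℝ)
    (hv : ∀ x : Item n m, 0 ≤ v x)
    (hvmono : ∀ (i : Fin n) (j j' : Fin m), j ≤ j' → v (i, j') ≤ v (i, j))
    (hc1 : c 0 ≤ 1) (hc0 : ∀ k, 0 ≤ c k) (hcmono : Antitone c)
    (hcK : ∀ k, K ≤ k → c k = 0)
    (α : Fin n → ℝ) (hα : ∀ i, 1 ≤ α i)
    (a : Alloc n m) (ha : ValidUnder (fun x => α x.1 * v x) a) :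
    ∃ aopt : Alloc n m,
      (∀ a' : Alloc n m, wel c v a' ≤ wel c v aopt) ∧
      ∑ t ∈ Finset.range K, (c t - c (t + 1)) *
          ∑ x ∈ topk aopt (t + 1) \ topk a (t + 1), v x
        ≤ ∑ i : Fin n, vcgPay c (fun x => α x.1 * v x) a i := by
  classical
  set σ : Equiv.Perm (Fin (n * m)) := Tuple.sort (fun k : Fin (n * m) => - v (a k)) with hσdef
  obtain ⟨hmono, hstab0⟩ := Tuple.eq_sort_iff.mp hσdef
  have hα0 : ∀ i, (0 : ℝ) < α i := fun i => lt_of_lt_of_le zero_lt_one (hα i)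
  have hβmono : ∀ s s' : Fin (n * m), s ≤ s' →
      α (a s').1 * v (a s') ≤ α (a s).1 * v (a s) := fun s s' h => ha s s' h
  have hsame : ∀ s s' : Fin (n * m), s' < s → (a s').1 = (a s).1 →
      v (a s) ≤ v (a s') := by
    intro s s' hlt hown
    have h1 : α (a s).1 * v (a s) ≤ α (a s').1 * v (a s') := ha s' s (le_of_lt hlt)
    rw [hown] at h1
    exact le_of_mul_le_mul_left h1 (hα0 _)
  have hstab : ∀ s s' : Fin (n * m), s' < s → (a s').1 = (a s).1 →
      σ.symm s' < σ.symm s := by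
    intro s s' hlt hown
    have hvle : v (a s) ≤ v (a s') := hsame s s' hlt hown
    rcases lt_trichotomy (σ.symm s') (σ.symm s) with h | h | h
    · exact h
    · exact absurd (σ.symm.injective h) (ne_of_lt hlt)
    · exfalso
      have hm : - v (a (σ (σ.symm s))) ≤ - v (a (σ (σ.symm s'))) := hmono (le_of_lt h)
      rw [Equiv.apply_symm_apply, Equiv.apply_symm_apply] at hm
      have hgeq : - v (a (σ (σ.symm s))) = - v (a (σ (σ.symm s'))) := by
        rw [Equiv.apply_symm_apply, Equiv.apply_symm_apply]
        linarith
      have hlt2 := hstab0 (σ.symm s) (σ.symm s') h hgeq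
      rw [Equiv.apply_symm_apply, Equiv.apply_symm_apply] at hlt2
      exact absurd hlt2 (not_lt.mpr (le_of_lt hlt))
  refine ⟨σ.trans a, ?_, ?_⟩
  · -- optimality
    intro a'
    have hu_anti : ∀ k k' : Fin (n * m), k ≤ k' → v (a (σ k')) ≤ v (a (σ k)) := by
      intro k k' h
      have h2 : - v (a (σ k)) ≤ - v (a (σ k')) := hmono h
      linarith
    have hmv : Monovary (fun k : Fin (n * m) => c (k : ℕ)) (fun k => v (a (σ k))) := by
      intro i j hij
      have hji : j < i := by
        by_contra hc
        push_neg at hc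
        exact absurd (hu_anti i j hc) (not_le.mpr hij)
      exact hcmono (by exact_mod_cast le_of_lt hji)
    have hre := hmv.sum_smul_comp_perm_le_sum_smul (σ := a'.trans (σ.trans a).symm)
    have h1 : wel c v a'
        = ∑ k : Fin (n * m), c (k : ℕ) * v (a (σ ((a'.trans (σ.trans a).symm) k))) := by
      unfold wel
      apply Finset.sum_congr rfl
      intro k _
      congr 1
      rw [Equiv.trans_apply, Equiv.symm_trans_apply, Equiv.apply_symm_apply,
        Equiv.apply_symm_apply]
    have h2 : wel c v (σ.trans a) = ∑ k : Fin (n * m), c (k : ℕ) * v (a (σ k)) := by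
      unfold wel
      apply Finset.sum_congr rfl
      intro k _
      rw [Equiv.trans_apply]
    rw [h1, h2]
    simpa only [smul_eq_mul] using hre
  · -- main revenue inequality
    have hvβ : ∀ s : Fin (n * m), v (a s) ≤ α (a s).1 * v (a s) :=
      fun s => le_mul_of_one_le_left (hv _) (hα _)
    have hβ0 : ∀ s : Fin (n * m), 0 ≤ α (a s).1 * v (a s) :=
      fun s => mul_nonneg (le_of_lt (hα0 _)) (hv _)
    have hcoeff : ∀ t : ℕ, 0 ≤ c t - c (t + 1) :=
      fun t => sub_nonneg.mpr (hcmono (Nat.le_succ t))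
    have htop : ∀ t : ℕ, ∑ x ∈ topk (σ.trans a) (t + 1) \ topk a (t + 1), v x
        = ∑ s ∈ univ.filter (fun s : Fin (n * m) => (σ.symm s : ℕ) ≤ t ∧ t < (s : ℕ)),
            v (a s) := by
      intro t
      have h1 : topk (σ.trans a) (t + 1)
          = (univ.filter fun s : Fin (n * m) => (σ.symm s : ℕ) < t + 1).image a := by
        unfold topk
        ext x
        simp only [Finset.mem_image, Finset.mem_filter, Finset.mem_univ, true_and,
          Equiv.trans_apply]
        constructor
        · rintro ⟨r, hr, rfl⟩
          exact ⟨σ r, by rw [Equiv.symm_apply_apply]; exact hr, rfl⟩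
        · rintro ⟨s, hs, rfl⟩
          exact ⟨σ.symm s, hs, by rw [Equiv.apply_symm_apply]⟩
      have h2 : topk a (t + 1)
          = (univ.filter fun s : Fin (n * m) => (s : ℕ) < t + 1).image a := rfl
      have h3 : (univ.filter fun s : Fin (n * m) => (σ.symm s : ℕ) < t + 1)
            \ (univ.filter fun s : Fin (n * m) => (s : ℕ) < t + 1)
          = univ.filter (fun s : Fin (n * m) => (σ.symm s : ℕ) ≤ t ∧ t < (s : ℕ)) := by
        ext y
        simp only [Finset.mem_sdiff, Finset.mem_filter, Finset.mem_univ, true_and, not_lt]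
        omega
      rw [h1, h2, ← Finset.image_sdiff _ _ a.injective, h3,
        Finset.sum_image (fun x _ y _ h => a.injective h)]
    calc ∑ t ∈ Finset.range K, (c t - c (t + 1)) *
            ∑ x ∈ topk (σ.trans a) (t + 1) \ topk a (t + 1), v x
        = ∑ t ∈ Finset.range K, (c t - c (t + 1)) *
            ∑ s ∈ univ.filter (fun s : Fin (n * m) => (σ.symm s : ℕ) ≤ t ∧ t < (s : ℕ)),
              v (a s) := Finset.sum_congr rfl fun t _ => by rw [htop t]
      _ ≤ ∑ t ∈ Finset.range K, (c t - c (t + 1)) *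
            ∑ s ∈ univ.filter (fun s : Fin (n * m) => (σ.symm s : ℕ) ≤ t ∧ t < (s : ℕ)),
              (α (a s).1 * v (a s)) := by
          apply Finset.sum_le_sum
          intro t _
          exact mul_le_mul_of_nonneg_left (Finset.sum_le_sum fun s _ => hvβ s) (hcoeff t)
      _ ≤ ∑ t ∈ Finset.range (n * m), (c t - c (t + 1)) *
            ∑ s ∈ univ.filter (fun s : Fin (n * m) => (σ.symm s : ℕ) ≤ t ∧ t < (s : ℕ)),
              (α (a s).1 * v (a s)) := by
          have hnonneg : ∀ t : ℕ, 0 ≤ (c t - c (t + 1)) *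
              ∑ s ∈ univ.filter (fun s : Fin (n * m) => (σ.symm s : ℕ) ≤ t ∧ t < (s : ℕ)),
                (α (a s).1 * v (a s)) :=
            fun t => mul_nonneg (hcoeff t) (Finset.sum_nonneg fun s _ => hβ0 s)
          have hzero : ∀ t : ℕ, n * m ≤ t → (c t - c (t + 1)) *
              ∑ s ∈ univ.filter (fun s : Fin (n * m) => (σ.symm s : ℕ) ≤ t ∧ t < (s : ℕ)),
                (α (a s).1 * v (a s)) = 0 := by
            intro t htt
            have hemp : (univ.filter
                (fun s : Fin (n * m) => (σ.symm s : ℕ) ≤ t ∧ t < (s : ℕ))) = ∅ := by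
              ext s
              simp only [Finset.mem_filter, Finset.mem_univ, true_and,
                Finset.notMem_empty, iff_false]
              intro hcon
              have := s.isLt
              omega
            rw [hemp, Finset.sum_empty, mul_zero]
          by_cases hKN : K ≤ n * m
          · exact Finset.sum_le_sum_of_subset_of_nonneg (Finset.range_subset_range.mpr hKN)
              (fun t _ _ => hnonneg t)
          · refine le_of_eq (Finset.sum_subset (Finset.range_subset_range.mpr (le_of_not_ge hKN))
              (fun t _ htnm => hzero t ?_)).symm
            rw [Finset.mem_range] at htnm
            omega
      _ ≤ ∑ t ∈ Finset.range (n * m), (c t - c (t + 1)) *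
            ∑ s : Fin (n * m), (MtsD (fun s => (a s).1) t s : ℝ) * (α (a s).1 * v (a s)) := by
          apply Finset.sum_le_sum
          intro t _
          refine mul_le_mul_of_nonneg_left ?_ (hcoeff t)
          exact layer_ineq (n * m) n (fun s => (a s).1) (fun s => σ.symm s)
            σ.symm.bijective hstab (fun s => α (a s).1 * v (a s)) hβmono hβ0 t
      _ = ∑ i : Fin n, ∑ s : Fin (n * m),
            (if (a s).1 ≠ i then
              (c (cntO (fun s' => (a s').1) i s) - c (s : ℕ)) * (α (a s).1 * v (a s))
            else 0) :=
          Q_layers (n * m) n (fun s => (a s).1) (fun s => α (a s).1 * v (a s)) c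
      _ ≤ ∑ i : Fin n, vcgPay c (fun x => α x.1 * v x) a i :=
          Finset.sum_le_sum fun i _ => vcgPay_ge c (fun x => α x.1 * v x) a i


end
end SponsoredShopping
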